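/- arXiv:2008.08646 — 7 statements merged into one kernel-verified Lean document; each statement's English description precedes it below -/
import Mathlib

section
/- If a simple digraph Γ₀ is obtained from a simple digraph Γ by flipping a single arc (a,b) ∈ E(Γ) (where (b,a) ∉ E(Γ)), i.e., replacing (a,b) by (b,a), then th(Γ₀) ≤ th(Γ) + 1. -/
open Set

/-- One time step of standard zero forcing on a digraph with arc relation `A`:
every blue vertex having a unique white out-neighbor forces it blue. -/
def dstep {V : Type*} (A : V → V → Prop) (S : Set V) : Set V :=
  S ∪ {w | ∃ u ∈ S, A u w ∧ ∀ x, A u x → x ∉ S → x = w}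

/-- `B` is a zero forcing set of the digraph with arc relation `A`. -/
def IsZFS {V : Type*} (A : V → V → Prop) (B : Set V) : Prop :=
  ∃ t, (dstep A)^[t] B = Set.univ

/-- Propagation time of `B` in the digraph with arc relation `A`. -/
noncomputable def dpt {V : Type*} (A : V → V → Prop) (B : Set V) : ℕ :=
  sInf {t | (dstep A)^[t] B = Set.univ}

/-- The throttling number of the digraph with arc relation `A`. -/
noncomputable def dth {V : Type*} (A : V → V → Prop) : ℕ :=
  sInf {k | ∃ B : Set V, IsZFS A B ∧ k = B.ncard + dpt A B}

/-- The digraph obtained by flipping the single arc `(a,b)` to `(b,a)`. -/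
def flipArc {V : Type*} (A : V → V → Prop) (a b : V) : V → V → Prop :=
  fun u v => (A u v ∧ ¬(u = a ∧ v = b)) ∨ (u = b ∧ v = a)

private lemma dstep_self {V : Type*} (A : V → V → Prop) (S : Set V) : S ⊆ dstep A S :=
  fun _ h => Or.inl h

private lemma iterate_subset {V : Type*} (A : V → V → Prop) (B : Set V) {s t : ℕ} (h : s ≤ t) :
    (dstep A)^[s] B ⊆ (dstep A)^[t] B := by
  induction t with
  | zero => simp_all
  | succ n ih =>
    rcases Nat.lt_or_ge s (n + 1) with h1 | h1
    · rw [Function.iterate_succ_apply']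
      exact (ih (Nat.lt_succ_iff.mp h1)).trans (dstep_self _ _)
    · have : s = n + 1 := le_antisymm h h1
      subst this; rfl

private lemma key {V : Type*} (A A' : V → V → Prop) (B : Set V) (c : V)
    (hstep : ∀ t (S' : Set V), (dstep A)^[t] B ∪ {c} ⊆ S' →
      dstep A ((dstep A)^[t] B) ∪ {c} ⊆ dstep A' S') :
    ∀ t, (dstep A)^[t] B ∪ {c} ⊆ (dstep A')^[t] (B ∪ {c}) := by
  intro t
  induction t with
  | zero => simp
  | succ n ih =>
    rw [Function.iterate_succ_apply', Function.iterate_succ_apply']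
    exact hstep n _ ih

/-- Flipping a single arc cannot increase the throttling number by more than one. -/
theorem stmt0 {V : Type*} [Fintype V] (A : V → V → Prop) (hirr : Irreflexive A)
    (a b : V) (hab : A a b) (hba : ¬ A b a) :
    dth (flipArc A a b) ≤ dth A + 1 := by
  classical
  set A' := flipArc A a b with hA'
  have hane : a ≠ b := fun h => hirr a (h ▸ hab)
  -- pick an optimal ZFS B for A
  have hne : {k | ∃ B : Set V, IsZFS A B ∧ k = B.ncard + dpt A B}.Nonempty := by
    refine ⟨(Set.univ : Set V).ncard + dpt A Set.univ, Set.univ, ⟨0, rfl⟩, rfl⟩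
  obtain ⟨B, hB, hk⟩ := Nat.sInf_mem hne
  have hTset : {t | (dstep A)^[t] B = Set.univ}.Nonempty := hB
  have hT : (dstep A)^[dpt A B] B = Set.univ := Nat.sInf_mem hTset
  set T := dpt A B with hTdef
  -- the generic finishing argument, given a good extra vertex c
  have finish : ∀ c : V,
      (∀ t (S' : Set V), (dstep A)^[t] B ∪ {c} ⊆ S' →
        dstep A ((dstep A)^[t] B) ∪ {c} ⊆ dstep A' S') →
      dth A' ≤ dth A + 1 := by
    intro c hstep
    have hkey := key A A' B c hstep T
    have huniv : (dstep A')^[T] (B ∪ {c}) = Set.univ := by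
      apply Set.eq_univ_of_univ_subset
      intro x _
      exact hkey (Or.inl (hT ▸ Set.mem_univ x))
    have hZ : IsZFS A' (B ∪ {c}) := ⟨T, huniv⟩
    have hdpt : dpt A' (B ∪ {c}) ≤ T := Nat.sInf_le huniv
    have hth : dth A' ≤ (B ∪ {c}).ncard + dpt A' (B ∪ {c}) :=
      Nat.sInf_le ⟨B ∪ {c}, hZ, rfl⟩
    have hcard : (B ∪ {c}).ncard ≤ B.ncard + 1 := by
      rw [Set.union_singleton]
      exact Set.ncard_insert_le c B
    have hdthA : dth A = B.ncard + T := hk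
    omega
  by_cases hQ : ∃ t, b ∈ (dstep A)^[t] B ∧ a ∉ (dstep A)^[t] B
  · -- case: use B ∪ {a}; then a never forces b in the A-run
    obtain ⟨t₀, hbt0, hat0⟩ := hQ
    apply finish a
    intro t S' hsub w hw
    rcases hw with hw | hw
    · rcases hw with hw | ⟨u, hu, hAuw, huniq⟩
      · exact Or.inl (hsub (Or.inl hw))
      · by_cases hwS' : w ∈ S'
        · exact Or.inl hwS'
        · have hnab : ¬(u = a ∧ w = b) := by
            rintro ⟨hua, hwb⟩
            -- a ∈ S_t, b ∉ S_t, but b ∈ S_{t₀}, a ∉ S_{t₀}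
            have hbt : b ∉ (dstep A)^[t] B := fun h => hwS' (hsub (Or.inl (hwb ▸ h)))
            have htle : t₀ ≤ t := by
              by_contra hlt
              exact hat0 (iterate_subset A B (le_of_not_ge hlt) (hua ▸ hu))
            exact hbt (iterate_subset A B htle hbt0)
          refine Or.inr ⟨u, hsub (Or.inl hu), Or.inl ⟨hAuw, hnab⟩, ?_⟩
          intro x hx hxS'
          rcases hx with ⟨hAux, _⟩ | ⟨_, rfl⟩
          · exact huniq x hAux (fun h => hxS' (hsub (Or.inl h)))
          · exact absurd (hsub (Or.inr rfl)) hxS'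
    · exact Or.inl (hsub (Or.inr hw))
  · -- case: use B ∪ {b}; whenever b is blue, a is blue
    push_neg at hQ
    apply finish b
    intro t S' hsub w hw
    rcases hw with hw | hw
    · rcases hw with hw | ⟨u, hu, hAuw, huniq⟩
      · exact Or.inl (hsub (Or.inl hw))
      · by_cases hwS' : w ∈ S'
        · exact Or.inl hwS'
        · have hwb : w ≠ b := fun h => hwS' (hsub (Or.inr h))
          refine Or.inr ⟨u, hsub (Or.inl hu), Or.inl ⟨hAuw, fun h => hwb h.2⟩, ?_⟩
          intro x hx hxS'
          rcases hx with ⟨hAux, _⟩ | ⟨hub, hxa⟩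
          · exact huniq x hAux (fun h => hxS' (hsub (Or.inl h)))
          · -- u = b, x = a : but b ∈ S_t forces a ∈ S_t, contradiction
            subst hub; subst hxa
            exact absurd (hsub (Or.inl (hQ t hu))) hxS'
    · exact Or.inl (hsub (Or.inr hw))
end

section
/- For every fixed positive integer t, there are (up to isomorphism) only finitely many simple digraphs Γ with th(Γ) = t. -/
open Set

lemma dstep_ncard_le {n : ℕ} (A : Fin n → Fin n → Prop) (S : Set (Fin n)) :
    (dstep A S).ncard ≤ 2 * S.ncard := by
  classical
  set F : Set (Fin n) := {w | ∃ u ∈ S, A u w ∧ ∀ x, A u x → x ∉ S → x = w} with hF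
  have hsub : dstep A S ⊆ S ∪ (F \ S) := by
    intro x hx
    rcases hx with h | h
    · exact Or.inl h
    · by_cases hxS : x ∈ S
      · exact Or.inl hxS
      · exact Or.inr ⟨h, hxS⟩
  have hfin : (S ∪ (F \ S)).Finite := Set.toFinite _
  have h1 : (dstep A S).ncard ≤ (S ∪ (F \ S)).ncard :=
    Set.ncard_le_ncard hsub hfin
  have h2 : (S ∪ (F \ S)).ncard ≤ S.ncard + (F \ S).ncard :=
    Set.ncard_union_le _ _
  -- injection from F \ S into S
  have hex : ∀ w ∈ F \ S, ∃ u, u ∈ S ∧ A u w ∧ ∀ x, A u x → x ∉ S → x = w := by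
    intro w hw
    rcases hw.1 with ⟨u, hu, hAu, huniq⟩
    exact ⟨u, hu, hAu, huniq⟩
  set f : Fin n → Fin n := fun w =>
    if h : ∃ u, u ∈ S ∧ A u w ∧ ∀ x, A u x → x ∉ S → x = w then h.choose else w with hf
  have hspec : ∀ w ∈ F \ S, f w ∈ S ∧ A (f w) w ∧ ∀ x, A (f w) x → x ∉ S → x = w := by
    intro w hw
    have h := hex w hw
    simp only [hf, dif_pos h]
    exact h.choose_spec
  have h3 : (F \ S).ncard ≤ S.ncard := by
    apply Set.ncard_le_ncard_of_injOn f (fun w hw => (hspec w hw).1)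
    · intro w hw w' hw' heq
      have h1 := hspec w hw
      have := h1.2.2 w' (heq ▸ (hspec w' hw').2.1) hw'.2
      exact this.symm
  omega

lemma iterate_ncard_le {n : ℕ} (A : Fin n → Fin n → Prop) (B : Set (Fin n)) (k : ℕ) :
    ((dstep A)^[k] B).ncard ≤ 2 ^ k * B.ncard := by
  induction k with
  | zero => simp
  | succ k ih =>
    rw [Function.iterate_succ_apply']
    calc (dstep A ((dstep A)^[k] B)).ncard ≤ 2 * ((dstep A)^[k] B).ncard :=
          dstep_ncard_le _ _
      _ ≤ 2 * (2 ^ k * B.ncard) := by omega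
      _ = 2 ^ (k + 1) * B.ncard := by ring

lemma card_le_of_dth {n : ℕ} (A : Fin n → Fin n → Prop) (t : ℕ) (ht : 0 < t)
    (hdth : dth A = t) : n ≤ 2 ^ t * t := by
  classical
  have hne : {k | ∃ B : Set (Fin n), IsZFS A B ∧ k = B.ncard + dpt A B}.Nonempty := by
    by_contra h
    rw [Set.not_nonempty_iff_eq_empty] at h
    rw [dth, h, Nat.sInf_empty] at hdth
    omega
  have hmem := Nat.sInf_mem hne
  rw [show sInf {k | ∃ B : Set (Fin n), IsZFS A B ∧ k = B.ncard + dpt A B} = dth A from rfl,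
    hdth] at hmem
  obtain ⟨B, hB, heq⟩ := hmem
  have hptne : {s | (dstep A)^[s] B = Set.univ}.Nonempty := hB
  have hpt : (dstep A)^[dpt A B] B = Set.univ := Nat.sInf_mem hptne
  have h1 : ((dstep A)^[dpt A B] B).ncard ≤ 2 ^ (dpt A B) * B.ncard :=
    iterate_ncard_le A B _
  rw [hpt, Set.ncard_univ, Nat.card_eq_fintype_card, Fintype.card_fin] at h1
  have hB1 : B.ncard ≤ t := by omega
  have hB2 : dpt A B ≤ t := by omega
  calc n ≤ 2 ^ (dpt A B) * B.ncard := h1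
    _ ≤ 2 ^ t * t := Nat.mul_le_mul (Nat.pow_le_pow_right (by norm_num) hB2) hB1

/-- For a fixed positive integer `t`, there are only finitely many simple digraphs with
throttling number `t` (every finite digraph being represented, up to isomorphism, by an
arc relation on some `Fin n`). -/
theorem stmt7 (t : ℕ) (ht : 0 < t) :
    {p : Σ n : ℕ, Fin n → Fin n → Prop |
      Irreflexive p.2 ∧ dth p.2 = t}.Finite := by
  classical
  set N := 2 ^ t * t with hN
  set f : (Σ i : Fin (N + 1), (Fin (i : ℕ) → Fin (i : ℕ) → Prop)) →
      (Σ n : ℕ, Fin n → Fin n → Prop) := fun x => ⟨(x.1 : ℕ), x.2⟩ with hf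
  apply Set.Finite.subset (Set.finite_range f)
  rintro ⟨n, A⟩ ⟨_, hdth⟩
  have hn : n ≤ N := card_le_of_dth A t ht hdth
  exact ⟨⟨⟨n, by omega⟩, A⟩, rfl⟩
end

section
/- Let G be a simple graph with at least one edge, and let [m,M] be the orientation throttling interval of G (m and M are the minimum and maximum of th(G⃗) over all orientations G⃗ of G). Then m ≤ th(G) and α(G) + 1 ≤ M, where α(G) is the independence number of G. -/
open Set

/-- One time step of standard zero forcing on an undirected graph `G`. -/
def ustep {V : Type*} (G : SimpleGraph V) (S : Set V) : Set V :=
  S ∪ {w | ∃ u ∈ S, G.Adj u w ∧ ∀ x, G.Adj u x → x ∉ S → x = w}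

/-- The throttling number of the undirected graph `G`. -/
noncomputable def uth {V : Type*} (G : SimpleGraph V) : ℕ :=
  sInf {k | ∃ B : Set V, (∃ t, (ustep G)^[t] B = Set.univ) ∧
    k = B.ncard + sInf {t | (ustep G)^[t] B = Set.univ}}

/-- `A` is an orientation of the simple graph `G`: every arc lies on an edge of `G`,
and each edge of `G` gets exactly one direction. -/
def IsOrientation {V : Type*} (G : SimpleGraph V) (A : V → V → Prop) : Prop :=
  (∀ u v, A u v → G.Adj u v) ∧ ∀ u v, G.Adj u v → (A u v ↔ ¬ A v u)

/-- The independence number of `G`. -/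
noncomputable def indepNum {V : Type*} (G : SimpleGraph V) : ℕ :=
  sSup {n | ∃ s : Finset V, (∀ a ∈ s, ∀ b ∈ s, a ≠ b → ¬ G.Adj a b) ∧ s.card = n}

lemma wor_iff {V : Type*} {u v : V} (h : u ≠ v) :
    WellOrderingRel u v ↔ ¬ WellOrderingRel v u := by
  constructor
  · intro h1 h2; exact asymm h1 h2
  · intro h1
    rcases trichotomous_of WellOrderingRel u v with h2 | rfl | h2
    · exact h2
    · exact absurd rfl h
    · exact absurd h2 h1

lemma dstep_mono {V : Type*} (A : V → V → Prop) {S T : Set V} (h : S ⊆ T) :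
    dstep A S ⊆ dstep A T := by
  intro w hw
  simp only [dstep, Set.mem_union, Set.mem_setOf_eq] at hw ⊢
  rcases hw with hw | ⟨u, hu, hA, huniq⟩
  · exact Or.inl (h hw)
  · exact Or.inr ⟨u, h hu, hA, fun x hx hxT => huniq x hx fun hxS => hxT (h hxS)⟩

lemma subset_iterate_ustep {V : Type*} (G : SimpleGraph V) (S : Set V) :
    ∀ t, S ⊆ (ustep G)^[t] S := by
  intro t
  induction t with
  | zero => simp
  | succ t ih =>
    rw [Function.iterate_succ_apply']
    exact ih.trans Set.subset_union_left

lemma ustep_iter_le {V : Type*} (G : SimpleGraph V) (B : Set V) {t t' : ℕ} (h : t ≤ t') :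
    (ustep G)^[t] B ⊆ (ustep G)^[t'] B := by
  obtain ⟨k, rfl⟩ := Nat.exists_eq_add_of_le h
  rw [Nat.add_comm, Function.iterate_add_apply]
  exact subset_iterate_ustep G _ k

/-- `u` can force `v` at some time in the undirected process starting at `B`. -/
def uforce {V : Type*} (G : SimpleGraph V) (B : Set V) (u v : V) : Prop :=
  ∃ t, u ∈ (ustep G)^[t] B ∧ v ∉ (ustep G)^[t] B ∧
    ∀ x, G.Adj u x → x ∉ (ustep G)^[t] B → x = v

lemma uforce_asymm {V : Type*} {G : SimpleGraph V} {B : Set V} {u v : V}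
    (h1 : uforce G B u v) (h2 : uforce G B v u) : False := by
  obtain ⟨t, hu, hv, -⟩ := h1
  obtain ⟨t', hv', hu', -⟩ := h2
  rcases le_total t t' with h | h
  · exact hu' (ustep_iter_le G B h hu)
  · exact hv (ustep_iter_le G B h hv')

/-- Orientation of `G` compatible with the undirected forcing process from `B`. -/
def orient1 {V : Type*} (G : SimpleGraph V) (B : Set V) (u v : V) : Prop :=
  G.Adj u v ∧ (uforce G B u v ∨ (¬ uforce G B u v ∧ ¬ uforce G B v u ∧ WellOrderingRel u v))

lemma orient1_isOrientation {V : Type*} (G : SimpleGraph V) (B : Set V) :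
    IsOrientation G (orient1 G B) := by
  constructor
  · exact fun u v h => h.1
  · intro u v hadj
    have hne : u ≠ v := hadj.ne
    constructor
    · rintro ⟨-, h⟩ ⟨-, h'⟩
      rcases h with hp | ⟨hnp, hnq, hr⟩
      · rcases h' with hq | ⟨hnq, hnp, -⟩
        · exact uforce_asymm hp hq
        · exact hnp hp
      · rcases h' with hq | ⟨-, -, hr'⟩
        · exact hnq hq
        · exact (wor_iff hne).mp hr hr'
    · intro h
      refine ⟨hadj, ?_⟩
      by_cases hp : uforce G B u v
      · exact Or.inl hp
      by_cases hq : uforce G B v u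
      · exact absurd ⟨hadj.symm, Or.inl hq⟩ h
      refine Or.inr ⟨hp, hq, ?_⟩
      rcases trichotomous_of WellOrderingRel u v with hr | rfl | hr
      · exact hr
      · exact absurd rfl hne
      · exact absurd ⟨hadj.symm, Or.inr ⟨hq, hp, hr⟩⟩ h

/-- Orientation of `G` with all arcs leaving the independent set `s`. -/
def orient2 {V : Type*} (G : SimpleGraph V) (s : Finset V) (u v : V) : Prop :=
  G.Adj u v ∧ ((u ∈ s ∧ v ∉ s) ∨ (u ∉ s ∧ v ∉ s ∧ WellOrderingRel u v))

lemma orient2_isOrientation {V : Type*} (G : SimpleGraph V) (s : Finset V)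
    (hs : ∀ a ∈ s, ∀ b ∈ s, a ≠ b → ¬ G.Adj a b) :
    IsOrientation G (orient2 G s) := by
  constructor
  · exact fun u v h => h.1
  · intro u v hadj
    have hne : u ≠ v := hadj.ne
    have hnb : ¬ (u ∈ s ∧ v ∈ s) := fun ⟨h1, h2⟩ => hs u h1 v h2 hne hadj
    have hwor := wor_iff hne
    constructor
    · rintro ⟨-, h⟩ ⟨-, h'⟩
      rcases h with ⟨h1, h2⟩ | ⟨h1, h2, h3⟩ <;>
        rcases h' with ⟨h1', h2'⟩ | ⟨h1', h2', h3'⟩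
      · exact h2 h1'
      · exact h2' h1
      · exact h2 h1'
      · exact hwor.mp h3 h3'
    · intro h
      refine ⟨hadj, ?_⟩
      by_cases hu : u ∈ s
      · exact Or.inl ⟨hu, fun hv => hnb ⟨hu, hv⟩⟩
      by_cases hv : v ∈ s
      · exact absurd ⟨hadj.symm, Or.inl ⟨hv, hu⟩⟩ h
      refine Or.inr ⟨hu, hv, ?_⟩
      rcases trichotomous_of WellOrderingRel u v with hr | rfl | hr
      · exact hr
      · exact absurd rfl hne
      · exact absurd ⟨hadj.symm, Or.inr ⟨hv, hu, hr⟩⟩ h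

lemma dth_le_card {V : Type*} [Fintype V] (A : V → V → Prop) :
    dth A ≤ Fintype.card V := by
  have hmem : Fintype.card V ∈ {k | ∃ B : Set V, IsZFS A B ∧ k = B.ncard + dpt A B} := by
    refine ⟨Set.univ, ⟨0, rfl⟩, ?_⟩
    have h0 : dpt A (Set.univ : Set V) = 0 := Nat.sInf_eq_zero.mpr (Or.inl rfl)
    rw [h0, Set.ncard_univ, Nat.card_eq_fintype_card, Nat.add_zero]
  exact Nat.sInf_le hmem

/-- If `[m, M]` is the orientation throttling interval of a graph `G` with at least one
edge, then `m ≤ th(G)` and `α(G) + 1 ≤ M`. -/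
theorem stmt10 {V : Type*} [Fintype V] (G : SimpleGraph V)
    (he : ∃ u v, G.Adj u v) :
    sInf {k | ∃ A : V → V → Prop, IsOrientation G A ∧ dth A = k} ≤ uth G ∧
    indepNum G + 1 ≤ sSup {k | ∃ A : V → V → Prop, IsOrientation G A ∧ dth A = k} := by
  classical
  constructor
  · -- minimum over orientations ≤ th(G)
    have hne : {k | ∃ B : Set V, (∃ t, (ustep G)^[t] B = Set.univ) ∧
        k = B.ncard + sInf {t | (ustep G)^[t] B = Set.univ}}.Nonempty := by
      refine ⟨(Set.univ : Set V).ncard + sInf {t | (ustep G)^[t] (Set.univ : Set V) = Set.univ},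
        Set.univ, ⟨0, rfl⟩, rfl⟩
    obtain ⟨B, hZ, hk⟩ := Nat.sInf_mem hne
    have hk' : uth G = B.ncard + sInf {t | (ustep G)^[t] B = Set.univ} := hk
    set p := sInf {t | (ustep G)^[t] B = Set.univ} with hp_def
    have hp : (ustep G)^[p] B = Set.univ := Nat.sInf_mem hZ
    set A := orient1 G B with hA_def
    have hOr : IsOrientation G A := orient1_isOrientation G B
    -- simulation: the oriented process dominates the undirected one
    have hsim : ∀ t, (ustep G)^[t] B ⊆ (dstep A)^[t] B := by
      intro t
      induction t with
      | zero => exact subset_rfl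
      | succ t ih =>
        rw [Function.iterate_succ_apply', Function.iterate_succ_apply']
        have h1 : ustep G ((ustep G)^[t] B) ⊆ dstep A ((ustep G)^[t] B) := by
          intro w hw
          simp only [ustep, Set.mem_union, Set.mem_setOf_eq] at hw
          simp only [dstep, Set.mem_union, Set.mem_setOf_eq]
          rcases hw with hw | ⟨u, hu, hadj, huniq⟩
          · exact Or.inl hw
          · by_cases hwS : w ∈ (ustep G)^[t] B
            · exact Or.inl hwS
            · have hP : uforce G B u w := ⟨t, hu, hwS, huniq⟩
              exact Or.inr ⟨u, hu, ⟨hadj, Or.inl hP⟩,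
                fun x hx hxS => huniq x hx.1 hxS⟩
        exact h1.trans (dstep_mono A ih)
    have hZA : (dstep A)^[p] B = Set.univ :=
      Set.eq_univ_of_univ_subset (hp ▸ hsim p)
    have hdpt : dpt A B ≤ p := Nat.sInf_le hZA
    have hdth : dth A ≤ B.ncard + dpt A B :=
      Nat.sInf_le ⟨B, ⟨p, hZA⟩, rfl⟩
    have hfin : dth A ≤ uth G := by rw [hk']; omega
    exact le_trans (Nat.sInf_le ⟨A, hOr, rfl⟩) hfin
  · -- α(G) + 1 ≤ maximum over orientations
    have hind_ne : {n | ∃ s : Finset V,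
        (∀ a ∈ s, ∀ b ∈ s, a ≠ b → ¬ G.Adj a b) ∧ s.card = n}.Nonempty :=
      ⟨0, ∅, by simp, rfl⟩
    have hind_bdd : BddAbove {n | ∃ s : Finset V,
        (∀ a ∈ s, ∀ b ∈ s, a ≠ b → ¬ G.Adj a b) ∧ s.card = n} :=
      ⟨Fintype.card V, by rintro n ⟨s, -, rfl⟩; exact Finset.card_le_univ s⟩
    obtain ⟨s, hsind, hscard⟩ := Nat.sSup_mem hind_ne hind_bdd
    have hscard' : s.card = indepNum G := hscard
    set A := orient2 G s with hA_def
    have hOr : IsOrientation G A := orient2_isOrientation G s hsind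
    -- every zero forcing set of A contains s, and the throttling value is ≥ |s| + 1
    have hlow : ∀ k ∈ {k | ∃ B : Set V, IsZFS A B ∧ k = B.ncard + dpt A B},
        s.card + 1 ≤ k := by
      rintro k ⟨B, hZFS, rfl⟩
      have hpmem : (dstep A)^[dpt A B] B = Set.univ := Nat.sInf_mem hZFS
      have hkey : ∀ t, ∀ v ∈ s, v ∈ (dstep A)^[t] B → v ∈ B := by
        intro t
        induction t with
        | zero => exact fun v _ h => h
        | succ t ih =>
          intro v hv h
          rw [Function.iterate_succ_apply'] at h
          simp only [dstep, Set.mem_union, Set.mem_setOf_eq] at h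
          rcases h with h | ⟨u, -, hAuv, -⟩
          · exact ih v hv h
          · rcases hAuv.2 with ⟨-, h2⟩ | ⟨-, h2, -⟩ <;> exact absurd hv h2
      have hsub : (↑s : Set V) ⊆ B := by
        intro v hv
        exact hkey (dpt A B) v hv (by rw [hpmem]; trivial)
      have hcard : s.card ≤ B.ncard := by
        calc s.card = (↑s : Set V).ncard := (Set.ncard_coe_finset s).symm
          _ ≤ B.ncard := Set.ncard_le_ncard hsub B.toFinite
      rcases Nat.eq_zero_or_pos (dpt A B) with h0 | h0
      · have hBuniv : B = Set.univ := by rw [h0] at hpmem; exact hpmem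
        obtain ⟨u, v, huv⟩ := he
        have hnuniv : s ≠ Finset.univ := by
          intro hEq
          have hu : u ∈ s := hEq ▸ Finset.mem_univ u
          have hv : v ∈ s := hEq ▸ Finset.mem_univ v
          exact hsind u hu v hv huv.ne huv
        have hlt : s.card < Fintype.card V := by
          have := Finset.card_lt_card (Finset.ssubset_univ_iff.mpr hnuniv)
          simpa using this
        have hB : B.ncard = Fintype.card V := by
          rw [hBuniv, Set.ncard_univ, Nat.card_eq_fintype_card]
        omega
      · omega
    have hTne : {k | ∃ B : Set V, IsZFS A B ∧ k = B.ncard + dpt A B}.Nonempty := by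
      refine ⟨(Set.univ : Set V).ncard + dpt A Set.univ, Set.univ, ⟨0, rfl⟩, rfl⟩
    have hdthA : s.card + 1 ≤ dth A := le_csInf hTne hlow
    have hbdd : BddAbove {k | ∃ A : V → V → Prop, IsOrientation G A ∧ dth A = k} :=
      ⟨Fintype.card V, by rintro k ⟨A', -, rfl⟩; exact dth_le_card A'⟩
    calc indepNum G + 1 = s.card + 1 := by rw [hscard']
      _ ≤ dth A := hdthA
      _ ≤ sSup {k | ∃ A : V → V → Prop, IsOrientation G A ∧ dth A = k} :=
        le_csSup hbdd ⟨A, hOr, rfl⟩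
end

section
/- If G is a simple graph with at least one edge and th(G) ≤ α(G) + 1, then for every integer k with th(G) ≤ k ≤ α(G) + 1, there is an orientation G⃗ of G with th(G⃗) = k. -/
open Set

namespace ZFAux

variable {V : Type*}

lemma subset_dstep (A : V → V → Prop) (S : Set V) : S ⊆ dstep A S := Set.subset_union_left

lemma iterate_subset (A : V → V → Prop) (B : Set V) {s t : ℕ} (h : s ≤ t) :
    (dstep A)^[s] B ⊆ (dstep A)^[t] B := by
  have hm : Monotone fun t => (dstep A)^[t] B :=
    monotone_nat_of_le_succ (fun n => by
      rw [Function.iterate_succ_apply']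
      exact subset_dstep _ _)
  exact hm h

lemma mem_iterate_self (A : V → V → Prop) (B : Set V) (t : ℕ) :
    B ⊆ (dstep A)^[t] B := iterate_subset A B (Nat.zero_le t)

lemma dth_le {A : V → V → Prop} {B : Set V} (hB : IsZFS A B) :
    dth A ≤ B.ncard + dpt A B := Nat.sInf_le ⟨B, hB, rfl⟩

lemma dpt_le {A : V → V → Prop} {B : Set V} {t : ℕ} (h : (dstep A)^[t] B = Set.univ) :
    dpt A B ≤ t := Nat.sInf_le h

lemma dpt_spec {A : V → V → Prop} {B : Set V} (hB : IsZFS A B) :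
    (dstep A)^[dpt A B] B = Set.univ := Nat.sInf_mem hB

lemma exists_dth_opt (A : V → V → Prop) :
    ∃ B : Set V, IsZFS A B ∧ dth A = B.ncard + dpt A B := by
  have h : dth A ∈ {k | ∃ B : Set V, IsZFS A B ∧ k = B.ncard + dpt A B} :=
    Nat.sInf_mem ⟨_, Set.univ, ⟨0, rfl⟩, rfl⟩
  exact h

lemma le_dth {A : V → V → Prop} {m : ℕ}
    (h : ∀ B : Set V, IsZFS A B → m ≤ B.ncard + dpt A B) : m ≤ dth A := by
  obtain ⟨B, hB, hEq⟩ := exists_dth_opt A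
  rw [hEq]; exact h B hB

lemma step_lemma {A A' : V → V → Prop} {u v : V}
    (hvu : ¬ A v u) (huv' : ¬ A' u v)
    (hoth : ∀ x y, ¬(x = u ∧ y = v) → ¬(x = v ∧ y = u) → (A x y ↔ A' x y))
    {D E : Set V} (hDE : D ⊆ E) (h2 : v ∈ D → u ∈ E)
    (hv : v ∈ dstep A D → v ∈ dstep A' E) :
    dstep A D ⊆ dstep A' E := by
  intro x hx
  have hx' := hx
  simp only [dstep, Set.mem_union, Set.mem_setOf_eq] at hx'
  rcases hx' with hxD | ⟨a, haD, hax, huniq⟩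
  · exact subset_dstep _ _ (hDE hxD)
  · by_cases hxv : x = v
    · subst hxv
      exact hv hx
    · have hax' : A' a x :=
        (hoth a x (fun h => hxv h.2) (fun h => hvu (by rw [h.1, h.2] at hax; exact hax))).mp hax
      refine Set.mem_union_right _ ⟨a, hDE haD, hax', ?_⟩
      intro y hay hyE
      by_cases hya : a = v ∧ y = u
      · obtain ⟨rfl, rfl⟩ := hya
        exact absurd (h2 haD) hyE
      · by_cases hyb : a = u ∧ y = v
        · obtain ⟨rfl, rfl⟩ := hyb
          exact absurd hay huv'
        · exact huniq y ((hoth a y hyb hya).mpr hay) fun hyD => hyE (hDE hyD)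

lemma dth_reverse {A A' : V → V → Prop} {u v : V}
    (hvu : ¬ A v u) (huv' : ¬ A' u v)
    (hoth : ∀ x y, ¬(x = u ∧ y = v) → ¬(x = v ∧ y = u) → (A x y ↔ A' x y)) :
    dth A' ≤ dth A + 1 := by
  obtain ⟨B, hB, hopt⟩ := exists_dth_opt A
  have hDT : (dstep A)^[dpt A B] B = Set.univ := dpt_spec hB
  set T := dpt A B with hTdef
  have hne : ∀ w : V, ∃ t, w ∈ (dstep A)^[t] B :=
    fun w => ⟨T, by rw [hDT]; trivial⟩
  set τ : V → ℕ := fun w => sInf {t | w ∈ (dstep A)^[t] B} with hτdef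
  have hmemτ : ∀ w, w ∈ (dstep A)^[τ w] B := fun w => Nat.sInf_mem (hne w)
  have hτle : ∀ {w t}, w ∈ (dstep A)^[t] B → τ w ≤ t := fun {w t} h => Nat.sInf_le h
  have hmem_of_τle : ∀ {w t}, τ w ≤ t → w ∈ (dstep A)^[t] B :=
    fun {w t} h => iterate_subset A B h (hmemτ w)
  rcases le_or_gt (τ u) (τ v) with hcase | hcase
  · -- add v
    have key : ∀ t, (dstep A)^[t] B ⊆ (dstep A')^[t] (insert v B) := by
      intro t; induction t with
      | zero => exact Set.subset_insert _ _
      | succ t ih =>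
        rw [Function.iterate_succ_apply', Function.iterate_succ_apply']
        have hvE : v ∈ (dstep A')^[t] (insert v B) :=
          mem_iterate_self _ _ t (Set.mem_insert _ _)
        refine step_lemma hvu huv' hoth ih ?_ (fun _ => subset_dstep _ _ hvE)
        intro hvD
        exact ih (hmem_of_τle (le_trans hcase (hτle hvD)))
    have hu2 : (dstep A')^[T] (insert v B) = Set.univ :=
      Set.eq_univ_of_univ_subset (hDT ▸ key T)
    have hZ : IsZFS A' (insert v B) := ⟨T, hu2⟩
    have h1 := dth_le hZ
    have h2 : (insert v B).ncard ≤ B.ncard + 1 := Set.ncard_insert_le _ _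
    have h3 : dpt A' (insert v B) ≤ T := dpt_le hu2
    omega
  · -- add u
    have huE : ∀ t, u ∈ (dstep A')^[t] (insert u B) :=
      fun t => mem_iterate_self _ _ t (Set.mem_insert _ _)
    have key : ∀ t, (dstep A)^[t] B ⊆ (dstep A')^[t] (insert u B) := by
      intro t; induction t with
      | zero => exact Set.subset_insert _ _
      | succ t ih =>
        rw [Function.iterate_succ_apply', Function.iterate_succ_apply']
        refine step_lemma hvu huv' hoth ih (fun _ => huE t) ?_
        intro hvD
        by_cases hvDt : v ∈ (dstep A)^[t] B
        · exact subset_dstep _ _ (ih hvDt)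
        · simp only [dstep, Set.mem_union, Set.mem_setOf_eq] at hvD
          rcases hvD with h | ⟨a, haD, hav, hun⟩
          · exact absurd h hvDt
          · have hau : a ≠ u := by
              rintro rfl
              exact hvDt (hmem_of_τle (hcase.trans_le (hτle haD)).le)
            have hav8 : a ≠ v := fun h => hvDt (h ▸ haD)
            have hav' : A' a v :=
              (hoth a v (fun h => hau h.1) (fun h => hav8 h.1)).mp hav
            refine Set.mem_union_right _ ⟨a, ih haD, hav', ?_⟩
            intro y hay hyE
            by_cases h1 : a = u ∧ y = v
            · exact absurd h1.1 hau
            · by_cases h2 : a = v ∧ y = u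
              · exact absurd h2.1 hav8
              · exact hun y ((hoth a y h1 h2).mpr hay) fun hyD => hyE (ih hyD)
    have hu2 : (dstep A')^[T] (insert u B) = Set.univ :=
      Set.eq_univ_of_univ_subset (hDT ▸ key T)
    have hZ : IsZFS A' (insert u B) := ⟨T, hu2⟩
    have h1 := dth_le hZ
    have h2 : (insert u B).ncard ≤ B.ncard + 1 := Set.ncard_insert_le _ _
    have h3 : dpt A' (insert u B) ≤ T := dpt_le hu2
    omega

def flipRel (A : V → V → Prop) (u v : V) : V → V → Prop :=
  fun x y => (x = v ∧ y = u) ∨ (¬(x = u ∧ y = v) ∧ A x y)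

lemma flip_orientation {G : SimpleGraph V} {A : V → V → Prop} {u v : V}
    (hA : IsOrientation G A) (hadj : G.Adj u v) :
    IsOrientation G (flipRel A u v) := by
  constructor
  · rintro x y (⟨rfl, rfl⟩ | ⟨-, h⟩)
    · exact hadj.symm
    · exact hA.1 x y h
  · intro x y hxy
    have hne := hadj.ne
    have hiff := hA.2 x y hxy
    by_cases h1 : x = u ∧ y = v
    · obtain ⟨rfl, rfl⟩ := h1
      simp [flipRel, hne, hne.symm]
    · by_cases h2 : x = v ∧ y = u
      · obtain ⟨rfl, rfl⟩ := h2
        simp [flipRel, hne, hne.symm]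
      · have h2' : ¬(y = u ∧ x = v) := fun h => h2 ⟨h.2, h.1⟩
        have h1' : ¬(y = v ∧ x = u) := fun h => h1 ⟨h.2, h.1⟩
        simpa [flipRel, h1, h2, h1', h2'] using hiff

lemma ivt [Fintype V] (G : SimpleGraph V) :
    ∀ n (A A' : V → V → Prop), IsOrientation G A → IsOrientation G A' →
      {p : V × V | A p.1 p.2 ∧ ¬ A' p.1 p.2}.ncard = n →
      ∀ k, dth A ≤ k → k ≤ dth A' →
      ∃ A'', IsOrientation G A'' ∧ dth A'' = k := by
  intro n
  induction n with
  | zero =>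
    intro A A' hA hA' hcard k hk1 hk2
    have hemp : {p : V × V | A p.1 p.2 ∧ ¬ A' p.1 p.2} = ∅ :=
      (Set.ncard_eq_zero (Set.toFinite _)).mp hcard
    have hAeq : A = A' := by
      funext x y
      apply propext
      by_cases hadj : G.Adj x y
      · constructor
        · intro h
          by_contra h'
          exact absurd (Set.eq_empty_iff_forall_notMem.mp hemp (x, y)) (fun hc => hc ⟨h, h'⟩)
        · intro h
          by_contra h'
          have hyx : A y x := (hA.2 y x hadj.symm).mpr h'
          have hyx' : ¬ A' y x := fun hc => ((hA'.2 x y hadj).mp h) hc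
          exact absurd (Set.eq_empty_iff_forall_notMem.mp hemp (y, x)) (fun hc => hc ⟨hyx, hyx'⟩)
      · exact iff_of_false (fun h => hadj (hA.1 x y h)) (fun h => hadj (hA'.1 x y h))
    rw [hAeq] at hk1
    exact ⟨A', hA', by omega⟩
  | succ n ih =>
    intro A A' hA hA' hcard k hk1 hk2
    have hne : {p : V × V | A p.1 p.2 ∧ ¬ A' p.1 p.2}.Nonempty :=
      Set.nonempty_of_ncard_ne_zero (by omega)
    obtain ⟨⟨u, v⟩, hmem⟩ := hne
    have hmem' : A u v ∧ ¬ A' u v := hmem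
    have hadj : G.Adj u v := hA.1 _ _ hmem'.1
    have hune : u ≠ v := hadj.ne
    have hvu : ¬ A v u := (hA.2 u v hadj).mp hmem'.1
    have hA'vu : A' v u := (hA'.2 v u hadj.symm).mpr hmem'.2
    have hflipor : IsOrientation G (flipRel A u v) := flip_orientation hA hadj
    have hflipuv : ¬ flipRel A u v u v := by simp [flipRel, hune]
    have hoth : ∀ x y, ¬(x = u ∧ y = v) → ¬(x = v ∧ y = u) → (A x y ↔ flipRel A u v x y) :=
      fun x y h1 h2 => by simp [flipRel, h1, h2]
    have d1 : dth (flipRel A u v) ≤ dth A + 1 := dth_reverse hvu hflipuv hoth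
    have hset : {p : V × V | flipRel A u v p.1 p.2 ∧ ¬ A' p.1 p.2} =
        {p : V × V | A p.1 p.2 ∧ ¬ A' p.1 p.2} \ {(u, v)} := by
      ext ⟨x, y⟩
      simp only [flipRel, Set.mem_setOf_eq, Set.mem_diff, Set.mem_singleton_iff, Prod.mk.injEq]
      constructor
      · rintro ⟨(⟨rfl, rfl⟩ | ⟨h1, hAxy⟩), hA'xy⟩
        · exact absurd hA'vu hA'xy
        · exact ⟨⟨hAxy, hA'xy⟩, h1⟩
      · rintro ⟨⟨hAxy, hA'xy⟩, h1⟩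
        exact ⟨Or.inr ⟨h1, hAxy⟩, hA'xy⟩
    have hcard' : {p : V × V | flipRel A u v p.1 p.2 ∧ ¬ A' p.1 p.2}.ncard = n := by
      rw [hset, Set.ncard_diff_singleton_of_mem hmem]
      omega
    rcases le_or_gt (dth (flipRel A u v)) k with h | h
    · exact ih (flipRel A u v) A' hflipor hA' hcard' k h hk2
    · exact ⟨A, hA, by omega⟩

lemma exists_low [Fintype V] (G : SimpleGraph V) :
    ∃ A : V → V → Prop, IsOrientation G A ∧ dth A ≤ uth G := by
  classical
  have hopt : uth G ∈ {k | ∃ B : Set V, (∃ t, (ustep G)^[t] B = Set.univ) ∧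
      k = B.ncard + sInf {t | (ustep G)^[t] B = Set.univ}} :=
    Nat.sInf_mem ⟨_, Set.univ, ⟨0, rfl⟩, rfl⟩
  obtain ⟨B, hB, hEq⟩ := hopt
  have hstep : ustep G = dstep G.Adj := rfl
  rw [hstep] at hB hEq
  set p := sInf {t | (dstep G.Adj)^[t] B = Set.univ} with hp
  have hP : (dstep G.Adj)^[p] B = Set.univ := Nat.sInf_mem hB
  have hne : ∀ w : V, ∃ t, w ∈ (dstep G.Adj)^[t] B :=
    fun w => ⟨p, by rw [hP]; trivial⟩
  set τ : V → ℕ := fun w => sInf {t | w ∈ (dstep G.Adj)^[t] B} with hτdef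
  have hmemτ : ∀ w, w ∈ (dstep G.Adj)^[τ w] B := fun w => Nat.sInf_mem (hne w)
  have hτle : ∀ {w t}, w ∈ (dstep G.Adj)^[t] B → τ w ≤ t := fun {w t} h => Nat.sInf_le h
  have hmem_of_τle : ∀ {w t}, τ w ≤ t → w ∈ (dstep G.Adj)^[t] B :=
    fun {w t} h => iterate_subset _ B h (hmemτ w)
  set e := Fintype.equivFin V with he
  set g : V → ℕ := fun w => (e w : ℕ) with hg
  have hginj : ∀ {a b : V}, a ≠ b → g a ≠ g b :=
    fun {a b} hab h => hab (e.injective (Fin.val_injective h))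
  set A : V → V → Prop := fun w x => G.Adj w x ∧ (τ w < τ x ∨ (τ w = τ x ∧ g w < g x)) with hA
  have hor : IsOrientation G A := by
    constructor
    · exact fun a b h => h.1
    · intro a b hab
      have hgne : g a ≠ g b := hginj hab.ne
      simp only [hA, hab, hab.symm, true_and]
      omega
  refine ⟨A, hor, ?_⟩
  have key : ∀ t, (dstep G.Adj)^[t] B ⊆ (dstep A)^[t] B := by
    intro t; induction t with
    | zero => exact subset_rfl
    | succ t ih =>
      rw [Function.iterate_succ_apply', Function.iterate_succ_apply']
      intro x hx
      simp only [dstep, Set.mem_union, Set.mem_setOf_eq] at hx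
      rcases hx with hx | ⟨a, haD, hax, hun⟩
      · exact subset_dstep _ _ (ih hx)
      · by_cases hxD : x ∈ (dstep G.Adj)^[t] B
        · exact subset_dstep _ _ (ih hxD)
        · have hτa : τ a ≤ t := hτle haD
          have hτx : t < τ x := by
            by_contra hcon
            push_neg at hcon
            exact hxD (hmem_of_τle hcon)
          refine Set.mem_union_right _ ⟨a, ih haD, ⟨hax, Or.inl (by omega)⟩, ?_⟩
          intro y hy hyE
          exact hun y hy.1 fun hyD => hyE (ih hyD)
  have hu2 : (dstep A)^[p] B = Set.univ := Set.eq_univ_of_univ_subset (hP ▸ key p)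
  have hZ : IsZFS A B := ⟨p, hu2⟩
  have h1 := dth_le hZ
  have h3 : dpt A B ≤ p := dpt_le hu2
  omega

lemma exists_high [Fintype V] (G : SimpleGraph V) (he : ∃ u v, G.Adj u v) :
    ∃ A : V → V → Prop, IsOrientation G A ∧ indepNum G + 1 ≤ dth A := by
  classical
  have hmem : indepNum G ∈
      {n | ∃ s : Finset V, (∀ a ∈ s, ∀ b ∈ s, a ≠ b → ¬ G.Adj a b) ∧ s.card = n} := by
    apply Nat.sSup_mem
    · exact ⟨0, ∅, by simp, rfl⟩
    · refine ⟨Fintype.card V, fun n hn => ?_⟩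
      obtain ⟨s, -, rfl⟩ := hn
      simpa using Finset.card_le_univ s
  obtain ⟨I, hInd, hIcard⟩ := hmem
  obtain ⟨u₀, v₀, h₀⟩ := he
  set e := Fintype.equivFin V with he'
  set g : V → ℕ := fun w => (e w : ℕ) with hg
  have hginj : ∀ {a b : V}, a ≠ b → g a ≠ g b :=
    fun {a b} hab h => hab (e.injective (Fin.val_injective h))
  set A : V → V → Prop := fun w x => G.Adj w x ∧ (w ∈ I ∨ (x ∉ I ∧ g w < g x)) with hA
  have hor : IsOrientation G A := by
    constructor
    · exact fun a b h => h.1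
    · intro a b hab
      have hgne : g a ≠ g b := hginj hab.ne
      have hnI : ¬(a ∈ I ∧ b ∈ I) := fun h => hInd a h.1 b h.2 hab.ne hab
      simp only [hA, hab, hab.symm, true_and]
      by_cases ha : a ∈ I
      · by_cases hb : b ∈ I
        · exact absurd ⟨ha, hb⟩ hnI
        · simp [ha, hb]
      · by_cases hb : b ∈ I
        · simp [ha, hb]
        · simp [ha, hb]; omega
  refine ⟨A, hor, ?_⟩
  apply le_dth
  intro B hB
  have hIB : ∀ w ∈ I, w ∈ B := by
    intro w hw
    by_contra hwB
    obtain ⟨T, hT⟩ := hB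
    have hnever : ∀ t, w ∉ (dstep A)^[t] B := by
      intro t; induction t with
      | zero => exact hwB
      | succ t ih =>
        rw [Function.iterate_succ_apply']
        intro hmem2
        simp only [dstep, Set.mem_union, Set.mem_setOf_eq] at hmem2
        rcases hmem2 with h | ⟨a, haD, haw, -⟩
        · exact ih h
        · rcases haw.2 with haI | ⟨hwI, -⟩
          · exact hInd a haI w hw haw.1.ne haw.1
          · exact hwI hw
    have := hnever T
    rw [hT] at this
    exact this (Set.mem_univ w)
  have hcardB : I.card ≤ B.ncard := by
    have hsub : (↑I : Set V) ⊆ B := fun w hw => hIB w (by exact_mod_cast hw)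
    calc I.card = (↑I : Set V).ncard := (Set.ncard_coe_finset I).symm
      _ ≤ B.ncard := Set.ncard_le_ncard hsub (Set.toFinite B)
  by_cases hBu : B = Set.univ
  · have hBn : B.ncard = Fintype.card V := by
      rw [hBu, Set.ncard_univ, Nat.card_eq_fintype_card]
    have hlt : I.card < Fintype.card V := by
      have hIne : I ≠ Finset.univ := by
        intro hIu
        exact hInd u₀ (hIu ▸ Finset.mem_univ u₀) v₀ (hIu ▸ Finset.mem_univ v₀) h₀.ne h₀
      have hss : I ⊂ Finset.univ := Finset.ssubset_univ_iff.mpr hIne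
      simpa using Finset.card_lt_card hss
    omega
  · have hdpt : 1 ≤ dpt A B := by
      rcases Nat.eq_zero_or_pos (dpt A B) with h0 | hpos
      · exfalso
        have := dpt_spec hB
        rw [h0] at this
        exact hBu this
      · exact hpos
    omega

end ZFAux

/-- If `th(G) ≤ α(G) + 1`, then every integer in `[th(G), α(G) + 1]` is the throttling
number of some orientation of `G`. -/
theorem stmt11 {V : Type*} [Fintype V] (G : SimpleGraph V)
    (he : ∃ u v, G.Adj u v) (h : uth G ≤ indepNum G + 1) :
    ∀ k : ℕ, uth G ≤ k → k ≤ indepNum G + 1 →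
      ∃ A : V → V → Prop, IsOrientation G A ∧ dth A = k := by
  intro k hk1 hk2
  obtain ⟨Al, hAl, hl⟩ := ZFAux.exists_low G
  obtain ⟨Ah, hAh, hh⟩ := ZFAux.exists_high G he
  exact ZFAux.ivt G _ Al Ah hAl hAh rfl k (le_trans hl hk1) (le_trans hk2 hh)
end

section
/- The tournament K⃗ₙ on vertices v₀,…,v_{n−1} with arcs (v_i,v_j) for all i > j satisfies th(K⃗ₙ) = n. -/
open Set

lemma aux_subsingleton (n : ℕ) (S : Set (Fin n)) :
    (dstep (fun i j : Fin n => (j : ℕ) < (i : ℕ)) S \ S).Subsingleton := by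
  intro w1 hw1 w2 hw2
  obtain ⟨hw1m, hns1⟩ := hw1
  obtain ⟨hw2m, hns2⟩ := hw2
  rcases hw1m with h | ⟨u1, hu1S, hu1a, hu1u⟩
  · exact absurd h hns1
  rcases hw2m with h | ⟨u2, hu2S, hu2a, hu2u⟩
  · exact absurd h hns2
  rcases le_total (w1 : ℕ) (w2 : ℕ) with h | h
  · exact hu2u w1 (lt_of_le_of_lt h hu2a) hns1
  · exact (hu1u w2 (lt_of_le_of_lt h hu1a) hns2).symm

lemma aux_card (n : ℕ) (S : Set (Fin n)) :
    (dstep (fun i j : Fin n => (j : ℕ) < (i : ℕ)) S).ncard ≤ S.ncard + 1 := by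
  set A := fun i j : Fin n => (j : ℕ) < (i : ℕ) with hA
  have hsub : dstep A S ⊆ S ∪ (dstep A S \ S) := by
    intro x hx
    by_cases hxS : x ∈ S
    · exact Or.inl hxS
    · exact Or.inr ⟨hx, hxS⟩
  calc (dstep A S).ncard ≤ (S ∪ (dstep A S \ S)).ncard :=
        Set.ncard_le_ncard hsub (Set.toFinite _)
    _ ≤ S.ncard + (dstep A S \ S).ncard := Set.ncard_union_le _ _
    _ ≤ S.ncard + 1 := by
        gcongr
        exact (Set.ncard_le_one_iff_eq (Set.toFinite _)).mpr ((aux_subsingleton n S).eq_empty_or_singleton)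

lemma aux_iter (n : ℕ) (S : Set (Fin n)) (t : ℕ) :
    ((dstep (fun i j : Fin n => (j : ℕ) < (i : ℕ)))^[t] S).ncard ≤ S.ncard + t := by
  induction t with
  | zero => simp
  | succ t ih =>
      rw [Function.iterate_succ_apply']
      calc _ ≤ _ + 1 := aux_card n _
        _ ≤ S.ncard + t + 1 := by omega

/-- The tournament on `v₀, …, v_{n-1}` with all arcs `(vᵢ, vⱼ)` for `i > j` has
throttling number `n`. -/
theorem stmt14 (n : ℕ) :
    dth (fun i j : Fin n => (j : ℕ) < (i : ℕ)) = n := by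
  set A := fun i j : Fin n => (j : ℕ) < (i : ℕ) with hA
  have hcard_univ : (Set.univ : Set (Fin n)).ncard = n := by
    simp [Set.ncard_univ]
  have hmem : n ∈ {k | ∃ B : Set (Fin n), IsZFS A B ∧ k = B.ncard + dpt A B} := by
    refine ⟨Set.univ, ⟨0, rfl⟩, ?_⟩
    have hdpt : dpt A (Set.univ : Set (Fin n)) = 0 := by
      apply Nat.sInf_eq_zero.mpr
      exact Or.inl rfl
    simp [hdpt, hcard_univ]
  apply le_antisymm
  · exact Nat.sInf_le hmem
  · refine le_csInf ⟨n, hmem⟩ ?_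
    rintro k ⟨B, ⟨t, ht⟩, rfl⟩
    have hne : {t | (dstep A)^[t] B = Set.univ}.Nonempty := ⟨t, ht⟩
    have hmem' := Nat.sInf_mem hne
    have := aux_iter n B (dpt A B)
    rw [show (dstep A)^[dpt A B] B = Set.univ from hmem', hcard_univ] at this
    omega
end

section
/- Let Γ⃗ be an oriented graph and u a vertex adjacent to k leaves (vertices of degree 1 in the underlying graph). Then every zero forcing set of Γ⃗ contains at least k − 1 of the leaves adjacent to u. -/
open Set

/-- If `u` is adjacent to the leaves in `L` (each of degree one in the underlying graph) in
an oriented graph, then any zero forcing set contains all but at most one of them. -/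
theorem stmt16 {V : Type*} [Fintype V] [DecidableEq V] (A : V → V → Prop)
    (hasym : ∀ u v, A u v → ¬ A v u)
    (u : V) (L : Finset V)
    (hL : ∀ l ∈ L, (A l u ∨ A u l) ∧ ∀ y, (A l y ∨ A y l) → y = u)
    (B : Finset V) (hB : IsZFS A (↑B : Set V)) :
    L.card - 1 ≤ (L ∩ B).card := by
  obtain ⟨t₀, ht₀⟩ := hB
  -- every leaf outside B must receive an arc from u
  have key : ∀ l ∈ L, l ∉ B → A u l := by
    intro l hl hlB
    by_contra hAul
    have hlu : A l u := ((hL l hl).1).resolve_right hAul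
    have hnever : ∀ t, l ∉ (dstep A)^[t] (↑B : Set V) := by
      intro t
      induction t with
      | zero => simpa using hlB
      | succ t ih =>
        rw [Function.iterate_succ_apply']
        rintro (h | ⟨v, _, hvl, _⟩)
        · exact ih h
        · have hvu := (hL l hl).2 v (Or.inr hvl)
          rw [hvu] at hvl
          exact hasym l u hlu hvl
    exact hnever t₀ (ht₀ ▸ Set.mem_univ l)
  have hone : (L \ B).card ≤ 1 := by
    rw [Finset.card_le_one]
    intro a ha b hb
    by_contra hab
    simp only [Finset.mem_sdiff] at ha hb
    have hAa := key a ha.1 ha.2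
    have hAb := key b hb.1 hb.2
    have hnever : ∀ t, a ∉ (dstep A)^[t] (↑B : Set V) ∧ b ∉ (dstep A)^[t] (↑B : Set V) := by
      intro t
      induction t with
      | zero => exact ⟨by simpa using ha.2, by simpa using hb.2⟩
      | succ t ih =>
        rw [Function.iterate_succ_apply']
        constructor
        · rintro (h | ⟨v, _, hva, huniq⟩)
          · exact ih.1 h
          · have hvu := (hL a ha.1).2 v (Or.inr hva)
            have hvb : A v b := by rw [hvu]; exact hAb
            exact hab (huniq b hvb ih.2).symm
        · rintro (h | ⟨v, _, hvb, huniq⟩)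
          · exact ih.2 h
          · have hvu := (hL b hb.1).2 v (Or.inr hvb)
            have hva : A v a := by rw [hvu]; exact hAa
            exact hab (huniq a hva ih.1)
    exact (hnever t₀).1 (ht₀ ▸ Set.mem_univ a)
  have hsum : (L ∩ B).card + (L \ B).card = L.card := Finset.card_inter_add_card_sdiff L B
  omega
end

section
/- Every orientation of the star K_{1,n−1} on n ≥ 2 vertices has throttling number exactly n. -/
open Set

/-- Every orientation of the star on `n ≥ 2` vertices has throttling number `n`. -/
theorem stmt18 {V : Type*} [Fintype V] (n : ℕ) (hn : 2 ≤ n)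
    (hcard : Fintype.card V = n) (c : V) (G : SimpleGraph V)
    (hG : ∀ u v, G.Adj u v ↔ u ≠ v ∧ (u = c ∨ v = c))
    (A : V → V → Prop) (hA : IsOrientation G A) :
    dth A = n := by
  classical
  -- each step adds at most one vertex
  have hstep : ∀ S : Set V, (dstep A S).ncard ≤ S.ncard + 1 := by
    intro S
    have hsub : ((dstep A S) \ S).Subsingleton := by
      rintro w₁ ⟨hw₁, hw₁S⟩ w₂ ⟨hw₂, hw₂S⟩
      rcases hw₁ with h | ⟨u₁, hu₁S, hA₁, huniq₁⟩
      · exact absurd h hw₁S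
      rcases hw₂ with h | ⟨u₂, hu₂S, hA₂, _⟩
      · exact absurd h hw₂S
      have hadj₁ := hA.1 _ _ hA₁
      have hadj₂ := hA.1 _ _ hA₂
      have h₁ := (hG _ _).1 hadj₁
      have h₂ := (hG _ _).1 hadj₂
      by_cases hc : c ∈ S
      · have hw₁c : w₁ ≠ c := fun h => hw₁S (h ▸ hc)
        have hw₂c : w₂ ≠ c := fun h => hw₂S (h ▸ hc)
        have hu₁ : u₁ = c := h₁.2.resolve_right hw₁c
        have hu₂ : u₂ = c := h₂.2.resolve_right hw₂c
        exact (huniq₁ w₂ (by rw [hu₁, ← hu₂]; exact hA₂) hw₂S).symm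
      · have hu₁c : u₁ ≠ c := fun h => hc (h ▸ hu₁S)
        have hu₂c : u₂ ≠ c := fun h => hc (h ▸ hu₂S)
        have e1 : w₁ = c := h₁.2.resolve_left hu₁c
        have e2 : w₂ = c := h₂.2.resolve_left hu₂c
        rw [e1, e2]
    have h1 : dstep A S ⊆ S ∪ ((dstep A S) \ S) := fun x hx => by
      by_cases hxS : x ∈ S
      · exact Or.inl hxS
      · exact Or.inr ⟨hx, hxS⟩
    calc (dstep A S).ncard ≤ (S ∪ ((dstep A S) \ S)).ncard :=
          Set.ncard_le_ncard h1 (Set.toFinite _)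
      _ ≤ S.ncard + ((dstep A S) \ S).ncard :=
          Set.ncard_union_le _ _
      _ ≤ S.ncard + 1 := by
          rcases hsub.eq_empty_or_singleton with h | ⟨x, h⟩
          · simp [h]
          · simp [h]
  have hiter : ∀ (t : ℕ) (B : Set V), ((dstep A)^[t] B).ncard ≤ B.ncard + t := by
    intro t
    induction t with
    | zero => simp
    | succ t ih =>
      intro B
      rw [Function.iterate_succ_apply']
      calc (dstep A ((dstep A)^[t] B)).ncard ≤ ((dstep A)^[t] B).ncard + 1 := hstep _
        _ ≤ B.ncard + t + 1 := by have := ih B; omega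
  have hmem : n ∈ {k | ∃ B : Set V, IsZFS A B ∧ k = B.ncard + dpt A B} := by
    refine ⟨Set.univ, ⟨0, by simp⟩, ?_⟩
    have h0 : dpt A (Set.univ : Set V) = 0 := by
      have : (0 : ℕ) ∈ {t | (dstep A)^[t] (Set.univ : Set V) = Set.univ} := by simp
      exact Nat.eq_zero_of_le_zero (Nat.sInf_le this)
    rw [h0, Set.ncard_univ, Nat.card_eq_fintype_card, hcard, Nat.add_zero]
  have hlb : ∀ k ∈ {k | ∃ B : Set V, IsZFS A B ∧ k = B.ncard + dpt A B}, n ≤ k := by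
    rintro k ⟨B, ⟨t, ht⟩, rfl⟩
    have hne : {t | (dstep A)^[t] B = Set.univ}.Nonempty := ⟨t, ht⟩
    have hdpt : (dstep A)^[dpt A B] B = Set.univ := Nat.sInf_mem hne
    have : ((dstep A)^[dpt A B] B).ncard = n := by
      rw [hdpt, Set.ncard_univ, Nat.card_eq_fintype_card, hcard]
    have := hiter (dpt A B) B
    omega
  exact le_antisymm (Nat.sInf_le hmem) (le_csInf ⟨n, hmem⟩ hlb)
end
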